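/- Fix p ∈ (4/3, 2), let p' = p/(p-1), and let μ satisfy 1/2 < μ ≤ 2/p'. Then for every α > 1 (integer), ∑_{1 ≤ |β| < α} ( α^{μ-1}·|β| / (|αβ|^{1/p'}·(1 + |β-α|^μ)) )² ≤ C·(α^{1-4/p'} + α^{2μ-4/p'}), with C depending only on p and μ; in particular, summing against any ℓ²-bounded coefficients (‖V_α‖₂²)_α with ∑_α ‖V_α‖₂² ≤ M gives a total bounded by C'·M since the exponents 1-4/p' and 2μ-4/p' are ≤ 0. -/

import Mathlib

open Real Finset

private lemma sqRpow (x e : ℝ) (hx : 0 ≤ x) : (x ^ e) ^ 2 = x ^ (2 * e) := by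
  rw [← Real.rpow_natCast (x ^ e) 2, ← Real.rpow_mul hx]
  norm_num [mul_comm]

private lemma auxN (a b μ c : ℝ) (ha : 1 ≤ a) (hb1 : 1 ≤ b) (hba : b ≤ a)
    (hc0 : 0 ≤ c) (hc1 : c ≤ 1) :
    a ^ (μ - 1) * b ≤ a ^ (μ - c) * b ^ c := by
  have ha0 : (0:ℝ) < a := by linarith
  have hb0 : (0:ℝ) < b := by linarith
  have h1 : a ^ (μ - 1) * b = a ^ (μ - 1) * (b ^ (1 - c) * b ^ c) := by
    rw [← Real.rpow_add hb0, show (1 - c) + c = 1 by ring, Real.rpow_one]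
  rw [h1]
  calc a ^ (μ - 1) * (b ^ (1 - c) * b ^ c)
      ≤ a ^ (μ - 1) * (a ^ (1 - c) * b ^ c) := by
        have h2 : b ^ (1 - c) ≤ a ^ (1 - c) := Real.rpow_le_rpow hb0.le hba (by linarith)
        exact mul_le_mul_of_nonneg_left
          (mul_le_mul_of_nonneg_right h2 (Real.rpow_nonneg hb0.le c))
          (Real.rpow_nonneg ha0.le _)
    _ = a ^ (μ - c) * b ^ c := by
        rw [← mul_assoc, ← Real.rpow_add ha0, show μ - 1 + (1 - c) = μ - c by ring]

private lemma termB (a b d μ c : ℝ) (ha : 1 ≤ a) (hb1 : 1 ≤ b) (hba : b ≤ a)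
    (hd : 0 < d) (hμ : 0 ≤ μ) (hc0 : 0 ≤ c) (hc1 : c ≤ 1) :
    a ^ (μ - 1) * b / (a ^ c * b ^ c * (1 + d ^ μ)) ≤ a ^ (μ - 2 * c) * d ^ (-μ) := by
  have ha0 : (0:ℝ) < a := by linarith
  have hb0 : (0:ℝ) < b := by linarith
  have hD : 0 < a ^ c * b ^ c * (1 + d ^ μ) := by positivity
  rw [div_le_iff₀ hD]
  have key : a ^ (μ - 1) * b ≤ a ^ (μ - c) * b ^ c := auxN a b μ c ha hb1 hba hc0 hc1
  have e1 : a ^ (μ - 2 * c) * d ^ (-μ) * (a ^ c * b ^ c * d ^ μ) = a ^ (μ - c) * b ^ c := by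
    rw [show a ^ (μ - 2*c) * d ^ (-μ) * (a ^ c * b ^ c * d ^ μ)
        = (a ^ (μ - 2*c) * a ^ c) * b ^ c * (d ^ (-μ) * d ^ μ) by ring,
      ← Real.rpow_add ha0, ← Real.rpow_add hd, show μ - 2*c + c = μ - c by ring,
      show -μ + μ = 0 by ring, Real.rpow_zero, mul_one]
  calc a ^ (μ - 1) * b ≤ a ^ (μ - c) * b ^ c := key
    _ = a ^ (μ - 2 * c) * d ^ (-μ) * (a ^ c * b ^ c * d ^ μ) := e1.symm
    _ ≤ a ^ (μ - 2 * c) * d ^ (-μ) * (a ^ c * b ^ c * (1 + d ^ μ)) := by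
        gcongr
        linarith [Real.rpow_nonneg hd.le μ]

set_option maxHeartbeats 2000000 in
theorem stmt_11 (p : ℝ) (hp : 4 / 3 < p) (hp2 : p < 2) (p' : ℝ) (hp' : p' = p / (p - 1))
    (μ : ℝ) (hμ : 1 / 2 < μ) (hμ2 : μ ≤ 2 / p') :
    (1 - 4 / p' ≤ 0 ∧ 2 * μ - 4 / p' ≤ 0) ∧
    ∃ C > 0, ∀ α : ℕ, 1 < α →
      ∑ β ∈ (Finset.Ioo (-(α : ℤ)) (α : ℤ)).filter (· ≠ 0),
          ((α : ℝ) ^ (μ - 1) * |(β : ℝ)| /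
            (|(α : ℝ) * (β : ℝ)| ^ (1 / p') * (1 + |(β : ℝ) - (α : ℝ)| ^ μ))) ^ 2 ≤
        C * ((α : ℝ) ^ (1 - 4 / p') + (α : ℝ) ^ (2 * μ - 4 / p')) := by
  have hp1 : (1:ℝ) < p := by linarith
  have hpm1 : (0:ℝ) < p - 1 := by linarith
  have hp'2 : 2 < p' := by rw [hp', lt_div_iff₀ hpm1]; linarith
  have hp'4 : p' < 4 := by rw [hp', div_lt_iff₀ hpm1]; linarith
  have hp'0 : (0:ℝ) < p' := by linarith
  have hc0 : (0:ℝ) < 1 / p' := by positivity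
  have hc1 : 1 / p' < 1 / 2 := by rw [div_lt_div_iff₀ hp'0 two_pos]; linarith
  have hc14 : 1 / 4 < 1 / p' := by rw [div_lt_div_iff₀ (by norm_num) hp'0]; linarith
  set c := 1 / p' with hc
  have h4c : 4 / p' = 4 * c := by rw [hc]; ring
  have h2c : 2 / p' = 2 * c := by rw [hc]; ring
  have hμ0 : (0:ℝ) < μ := by linarith
  have hμ2c : μ ≤ 2 * c := by rw [← h2c]; exact hμ2
  refine ⟨⟨by rw [h4c]; linarith, by rw [h4c]; linarith⟩, ?_⟩
  have hsum : Summable (fun n : ℕ => (n:ℝ) ^ (-(2*μ))) :=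
    Real.summable_nat_rpow.mpr (by linarith)
  set S := ∑' n : ℕ, (n:ℝ) ^ (-(2*μ)) with hS
  have hS0 : 0 ≤ S := tsum_nonneg fun n => Real.rpow_nonneg (Nat.cast_nonneg n) _
  refine ⟨1 + S, by linarith, ?_⟩
  intro α hα
  rw [h4c]
  set a : ℝ := (α:ℝ) with haa
  have ha1 : (1:ℝ) ≤ a := by
    rw [haa]
    exact_mod_cast (show (1:ℕ) ≤ α by omega)
  have ha0 : (0:ℝ) < a := by linarith
  have hsplit : (Finset.Ioo (-(α : ℤ)) (α : ℤ)).filter (· ≠ 0)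
      = Finset.Ioo (-(α:ℤ)) 0 ∪ Finset.Ioo 0 (α:ℤ) := by
    ext x
    simp only [Finset.mem_filter, Finset.mem_Ioo, Finset.mem_union, ne_eq]
    omega
  have hdisj : Disjoint (Finset.Ioo (-(α:ℤ)) 0) (Finset.Ioo 0 (α:ℤ)) := by
    simp only [Finset.disjoint_left, Finset.mem_Ioo]
    intro x hx hx'
    omega
  rw [hsplit, Finset.sum_union hdisj]
  -- negative part
  have hneg : ∀ β ∈ Finset.Ioo (-(α:ℤ)) 0,
      (a ^ (μ - 1) * |(β : ℝ)| / (|a * (β : ℝ)| ^ c * (1 + |(β : ℝ) - a| ^ μ))) ^ 2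
        ≤ a ^ (-(4*c)) := by
    intro β hβ
    rw [Finset.mem_Ioo] at hβ
    have hβ1 : (β:ℝ) ≤ -1 := by exact_mod_cast (show β ≤ -1 by omega)
    have hβa : -a < (β:ℝ) := by
      rw [haa]
      exact_mod_cast hβ.1
    have hb1 : (1:ℝ) ≤ -(β:ℝ) := by linarith
    have hba : -(β:ℝ) ≤ a := by linarith
    have habsβ : |(β:ℝ)| = -(β:ℝ) := abs_of_nonpos (by linarith)
    have habsd : |(β:ℝ) - a| = a + -(β:ℝ) := by
      rw [abs_of_nonpos (by linarith)]; ring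
    have habsm : |a * (β:ℝ)| = a * -(β:ℝ) := by
      rw [abs_mul, abs_of_nonneg ha0.le, habsβ]
    rw [habsβ, habsd, habsm, Real.mul_rpow ha0.le (by linarith)]
    have h1 := termB a (-(β:ℝ)) (a + -(β:ℝ)) μ c ha1 hb1 hba (by linarith) hμ0.le hc0.le
      (by linarith)
    have h2 : (a + -(β:ℝ)) ^ (-μ) ≤ a ^ (-μ) :=
      Real.rpow_le_rpow_of_nonpos ha0 (by linarith) (by linarith)
    have h3 : a ^ (μ - 1) * -(β:ℝ) / (a ^ c * (-(β:ℝ)) ^ c * (1 + (a + -(β:ℝ)) ^ μ))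
        ≤ a ^ (-(2*c)) := by
      calc a ^ (μ - 1) * -(β:ℝ) / (a ^ c * (-(β:ℝ)) ^ c * (1 + (a + -(β:ℝ)) ^ μ))
          ≤ a ^ (μ - 2*c) * (a + -(β:ℝ)) ^ (-μ) := h1
        _ ≤ a ^ (μ - 2*c) * a ^ (-μ) :=
            mul_le_mul_of_nonneg_left h2 (Real.rpow_nonneg ha0.le _)
        _ = a ^ (-(2*c)) := by
            rw [← Real.rpow_add ha0, show μ - 2*c + -μ = -(2*c) by ring]
    have h0 : 0 ≤ a ^ (μ - 1) * -(β:ℝ) / (a ^ c * (-(β:ℝ)) ^ c * (1 + (a + -(β:ℝ)) ^ μ)) := by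
      have : (0:ℝ) < -(β:ℝ) := by linarith
      positivity
    calc (a ^ (μ - 1) * -(β:ℝ) / (a ^ c * (-(β:ℝ)) ^ c * (1 + (a + -(β:ℝ)) ^ μ))) ^ 2
        ≤ (a ^ (-(2*c))) ^ 2 := by gcongr
      _ = a ^ (-(4*c)) := by
          rw [sqRpow _ _ ha0.le, show (2:ℝ) * -(2*c) = -(4*c) by ring]
  have hSneg : ∑ β ∈ Finset.Ioo (-(α:ℤ)) 0,
      (a ^ (μ - 1) * |(β : ℝ)| / (|a * (β : ℝ)| ^ c * (1 + |(β : ℝ) - a| ^ μ))) ^ 2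
        ≤ a ^ (1 - 4*c) := by
    calc ∑ β ∈ Finset.Ioo (-(α:ℤ)) 0,
        (a ^ (μ - 1) * |(β : ℝ)| / (|a * (β : ℝ)| ^ c * (1 + |(β : ℝ) - a| ^ μ))) ^ 2
        ≤ (Finset.Ioo (-(α:ℤ)) 0).card • a ^ (-(4*c)) :=
          Finset.sum_le_card_nsmul _ _ _ hneg
      _ = ((Finset.Ioo (-(α:ℤ)) 0).card : ℝ) * a ^ (-(4*c)) := nsmul_eq_mul _ _
      _ ≤ a * a ^ (-(4*c)) := by
          have hcard : ((Finset.Ioo (-(α:ℤ)) 0).card : ℝ) ≤ a := by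
            rw [Int.card_Ioo]
            have : (0 - -(α:ℤ) - 1).toNat ≤ α := by omega
            calc ((0 - -(α:ℤ) - 1).toNat : ℝ) ≤ (α : ℝ) := by exact_mod_cast this
              _ = a := rfl
          have := Real.rpow_nonneg ha0.le (-(4*c))
          nlinarith
      _ = a ^ (1 - 4*c) := by
          rw [show (1:ℝ) - 4*c = 1 + -(4*c) by ring, Real.rpow_add ha0, Real.rpow_one]
  -- positive part
  have hpos : ∀ β ∈ Finset.Ioo 0 (α:ℤ),
      (a ^ (μ - 1) * |(β : ℝ)| / (|a * (β : ℝ)| ^ c * (1 + |(β : ℝ) - a| ^ μ))) ^ 2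
        ≤ a ^ (2*μ - 4*c) * (a - (β:ℝ)) ^ (-(2*μ)) := by
    intro β hβ
    rw [Finset.mem_Ioo] at hβ
    have hβ1 : (1:ℝ) ≤ (β:ℝ) := by exact_mod_cast (show (1:ℤ) ≤ β by omega)
    have hβa : (β:ℝ) ≤ a - 1 := by
      have : β ≤ (α:ℤ) - 1 := by omega
      have h' : (β:ℝ) ≤ ((α:ℤ):ℝ) - 1 := by exact_mod_cast this
      push_cast at h'
      linarith
    have hd : (0:ℝ) < a - (β:ℝ) := by linarith
    have habsβ : |(β:ℝ)| = (β:ℝ) := abs_of_nonneg (by linarith)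
    have habsd : |(β:ℝ) - a| = a - (β:ℝ) := by
      rw [abs_of_nonpos (by linarith)]; ring
    have habsm : |a * (β:ℝ)| = a * (β:ℝ) := abs_of_nonneg (by nlinarith)
    rw [habsβ, habsd, habsm, Real.mul_rpow ha0.le (by linarith)]
    have h1 := termB a ((β:ℝ)) (a - (β:ℝ)) μ c ha1 hβ1 (by linarith) hd hμ0.le hc0.le
      (by linarith)
    have h0 : 0 ≤ a ^ (μ - 1) * (β:ℝ) / (a ^ c * ((β:ℝ)) ^ c * (1 + (a - (β:ℝ)) ^ μ)) := by
      have : (0:ℝ) < (β:ℝ) := by linarith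
      positivity
    calc (a ^ (μ - 1) * (β:ℝ) / (a ^ c * ((β:ℝ)) ^ c * (1 + (a - (β:ℝ)) ^ μ))) ^ 2
        ≤ (a ^ (μ - 2*c) * (a - (β:ℝ)) ^ (-μ)) ^ 2 := by gcongr
      _ = a ^ (2*μ - 4*c) * (a - (β:ℝ)) ^ (-(2*μ)) := by
          rw [mul_pow, sqRpow _ _ ha0.le, sqRpow _ _ hd.le,
            show (2:ℝ) * (μ - 2*c) = 2*μ - 4*c by ring,
            show (2:ℝ) * -μ = -(2*μ) by ring]
  have hre : ∑ β ∈ Finset.Ioo (0:ℤ) (α:ℤ), (a - (β:ℝ)) ^ (-(2*μ))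
      = ∑ n ∈ Finset.Ioo 0 α, ((n:ℝ)) ^ (-(2*μ)) := by
    apply Finset.sum_nbij' (i := fun β => ((α:ℤ) - β).toNat) (j := fun n => (α:ℤ) - (n:ℤ))
    · intro β hβ
      rw [Finset.mem_Ioo] at hβ ⊢
      omega
    · intro n hn
      rw [Finset.mem_Ioo] at hn ⊢
      omega
    · intro β hβ
      rw [Finset.mem_Ioo] at hβ
      omega
    · intro n hn
      rw [Finset.mem_Ioo] at hn
      omega
    · intro β hβ
      rw [Finset.mem_Ioo] at hβ
      congr 1
      rw [haa]
      have h := Int.toNat_of_nonneg (show (0:ℤ) ≤ (α:ℤ) - β by omega)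
      exact_mod_cast h.symm
  have hSpos : ∑ β ∈ Finset.Ioo (0:ℤ) (α:ℤ),
      (a ^ (μ - 1) * |(β : ℝ)| / (|a * (β : ℝ)| ^ c * (1 + |(β : ℝ) - a| ^ μ))) ^ 2
        ≤ a ^ (2*μ - 4*c) * S := by
    calc ∑ β ∈ Finset.Ioo (0:ℤ) (α:ℤ),
        (a ^ (μ - 1) * |(β : ℝ)| / (|a * (β : ℝ)| ^ c * (1 + |(β : ℝ) - a| ^ μ))) ^ 2
        ≤ ∑ β ∈ Finset.Ioo (0:ℤ) (α:ℤ), a ^ (2*μ - 4*c) * (a - (β:ℝ)) ^ (-(2*μ)) :=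
          Finset.sum_le_sum hpos
      _ = a ^ (2*μ - 4*c) * ∑ β ∈ Finset.Ioo (0:ℤ) (α:ℤ), (a - (β:ℝ)) ^ (-(2*μ)) := by
          rw [Finset.mul_sum]
      _ ≤ a ^ (2*μ - 4*c) * S := by
          gcongr
          rw [hre]
          exact Summable.sum_le_tsum _ (fun n _ => Real.rpow_nonneg (Nat.cast_nonneg n) _) hsum
  have hX : (0:ℝ) ≤ a ^ (1 - 4*c) := Real.rpow_nonneg ha0.le _
  have hY : (0:ℝ) ≤ a ^ (2*μ - 4*c) := Real.rpow_nonneg ha0.le _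
  nlinarith [mul_nonneg hS0 hX, mul_nonneg hS0 hY]
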